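/- Let (A, S, D) be a solution of the Maxwell–Bloch equations with ω = 0 on [0,∞), and suppose r, φ, S_R, S_I, D_R : [0,∞) → ℝ are differentiable with r(t) > 0, A(t) = r(t) e^{iφ(t)}, S(t) = (S_R(t) + i S_I(t)) e^{iφ(t)} and D(t) = D_R(t) + d for all t ≥ 0. Then for all t ≥ 0: r' = −κ r + g S_R, S_R' = −γ S_R + g r (D_R + d) + g S_I²/r, S_I' = −γ S_I − g S_I S_R / r, D_R' = −2γ D_R − 4 g r S_R, and φ' = g S_I / r. -/

import Mathlib

open Set Complex

/-- **Polar-coordinate form of the Maxwell–Bloch equations with `ω = 0`.**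
If `(A, S, D)` solves the Maxwell–Bloch equations with `ω = 0` and
`A = r e^{iφ}`, `S = (S_R + i S_I) e^{iφ}`, `D = D_R + d` with `r > 0` and all of
`r, φ, S_R, S_I, D_R` differentiable, then their derivatives satisfy
`r' = −κr + gS_R`, `S_R' = −γS_R + gr(D_R + d) + gS_I²/r`, `S_I' = −γS_I − gS_IS_R/r`,
`D_R' = −2γD_R − 4grS_R` and `φ' = gS_I/r`. -/
theorem maxwell_bloch_polar_coordinates
    (g κ γ d : ℝ) (hg : g ≠ 0) (hκ : 0 < κ) (hγ : 0 < γ)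
    (hd : -1 < d ∧ d < 1)
    (A S : ℝ → ℂ) (D : ℝ → ℝ)
    (hA : ∀ t ≥ (0 : ℝ), HasDerivAt A (-(κ : ℂ) * A t + (g : ℂ) * S t) t)
    (hS : ∀ t ≥ (0 : ℝ), HasDerivAt S (-(γ : ℂ) * S t + (g : ℂ) * A t * (D t : ℂ)) t)
    (hD : ∀ t ≥ (0 : ℝ),
      HasDerivAt D (-4 * g * ((starRingEnd ℂ) (A t) * S t).re - 2 * γ * (D t - d)) t)
    (r φ SR SI DR r' φ' SR' SI' DR' : ℝ → ℝ)
    (hr : ∀ t ≥ (0 : ℝ), HasDerivAt r (r' t) t)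
    (hφ : ∀ t ≥ (0 : ℝ), HasDerivAt φ (φ' t) t)
    (hSR : ∀ t ≥ (0 : ℝ), HasDerivAt SR (SR' t) t)
    (hSI : ∀ t ≥ (0 : ℝ), HasDerivAt SI (SI' t) t)
    (hDR : ∀ t ≥ (0 : ℝ), HasDerivAt DR (DR' t) t)
    (hrpos : ∀ t ≥ (0 : ℝ), 0 < r t)
    (hAeq : ∀ t ≥ (0 : ℝ), A t = (r t : ℂ) * Complex.exp (Complex.I * (φ t : ℂ)))
    (hSeq : ∀ t ≥ (0 : ℝ),
      S t = ((SR t : ℂ) + Complex.I * (SI t : ℂ)) * Complex.exp (Complex.I * (φ t : ℂ)))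
    (hDeq : ∀ t ≥ (0 : ℝ), D t = DR t + d) :
    ∀ t ≥ (0 : ℝ),
      r' t = -κ * r t + g * SR t ∧
      SR' t = -γ * SR t + g * r t * (DR t + d) + g * SI t ^ 2 / r t ∧
      SI' t = -γ * SI t - g * SI t * SR t / r t ∧
      DR' t = -2 * γ * DR t - 4 * g * r t * SR t ∧
      φ' t = g * SI t / r t := by
  intro t ht
  have hud : UniqueDiffWithinAt ℝ (Ici (0:ℝ)) t := uniqueDiffOn_Ici 0 t ht
  have hrne : r t ≠ 0 := (hrpos t ht).ne'
  have hexp : Complex.exp (Complex.I * (φ t : ℂ)) ≠ 0 := Complex.exp_ne_zero _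
  -- derivative of exp(I φ)
  have hE : HasDerivAt (fun s => Complex.exp (Complex.I * (φ s : ℂ)))
      (Complex.I * (φ' t : ℂ) * Complex.exp (Complex.I * (φ t : ℂ))) t := by
    have h1 : HasDerivAt (fun s => Complex.I * (φ s : ℂ)) (Complex.I * (φ' t : ℂ)) t :=
      ((hφ t ht).ofReal_comp).const_mul Complex.I
    simpa [mul_comm] using h1.cexp
  -- derivative of r e^{iφ}
  have hAalt : HasDerivAt (fun s => (r s : ℂ) * Complex.exp (Complex.I * (φ s : ℂ)))
      (((r' t : ℂ) + Complex.I * (r t : ℂ) * (φ' t : ℂ)) * Complex.exp (Complex.I * (φ t : ℂ))) t := by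
    have := ((hr t ht).ofReal_comp).mul hE
    exact this.congr_deriv (by ring)
  -- derivative of (SR + I SI) e^{iφ}
  have hSalt : HasDerivAt
      (fun s => ((SR s : ℂ) + Complex.I * (SI s : ℂ)) * Complex.exp (Complex.I * (φ s : ℂ)))
      (((SR' t : ℂ) + Complex.I * (SI' t : ℂ)
        + Complex.I * (φ' t : ℂ) * ((SR t : ℂ) + Complex.I * (SI t : ℂ)))
        * Complex.exp (Complex.I * (φ t : ℂ))) t := by
    have hin : HasDerivAt (fun s => ((SR s : ℂ) + Complex.I * (SI s : ℂ)))
        ((SR' t : ℂ) + Complex.I * (SI' t : ℂ)) t :=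
      ((hSR t ht).ofReal_comp).add (((hSI t ht).ofReal_comp).const_mul Complex.I)
    have := hin.mul hE
    exact this.congr_deriv (by ring)
  -- A equation within Ici 0
  have heqA : -(κ : ℂ) * A t + (g : ℂ) * S t
      = ((r' t : ℂ) + Complex.I * (r t : ℂ) * (φ' t : ℂ)) * Complex.exp (Complex.I * (φ t : ℂ)) := by
    refine hud.eq_deriv _ (hA t ht).hasDerivWithinAt
      (hAalt.hasDerivWithinAt.congr (fun s hs => hAeq s hs) (hAeq t ht))
  have heqA' : -(κ : ℂ) * (r t : ℂ) + (g : ℂ) * ((SR t : ℂ) + Complex.I * (SI t : ℂ))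
      = (r' t : ℂ) + Complex.I * (r t : ℂ) * (φ' t : ℂ) := by
    have := heqA
    rw [hAeq t ht, hSeq t ht] at this
    have h2 : (-(κ : ℂ) * (r t : ℂ) + (g : ℂ) * ((SR t : ℂ) + Complex.I * (SI t : ℂ)))
        * Complex.exp (Complex.I * (φ t : ℂ))
        = ((r' t : ℂ) + Complex.I * (r t : ℂ) * (φ' t : ℂ))
        * Complex.exp (Complex.I * (φ t : ℂ)) := by
      rw [← this]; ring
    exact mul_right_cancel₀ hexp h2
  -- S equation
  have heqS : -(γ : ℂ) * S t + (g : ℂ) * A t * (D t : ℂ)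
      = ((SR' t : ℂ) + Complex.I * (SI' t : ℂ)
        + Complex.I * (φ' t : ℂ) * ((SR t : ℂ) + Complex.I * (SI t : ℂ)))
        * Complex.exp (Complex.I * (φ t : ℂ)) := by
    refine hud.eq_deriv _ (hS t ht).hasDerivWithinAt
      (hSalt.hasDerivWithinAt.congr (fun s hs => hSeq s hs) (hSeq t ht))
  have heqS' : -(γ : ℂ) * ((SR t : ℂ) + Complex.I * (SI t : ℂ)) + (g : ℂ) * (r t : ℂ) * (D t : ℂ)
      = (SR' t : ℂ) + Complex.I * (SI' t : ℂ)
        + Complex.I * (φ' t : ℂ) * ((SR t : ℂ) + Complex.I * (SI t : ℂ)) := by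
    have := heqS
    rw [hAeq t ht, hSeq t ht] at this
    have h2 : (-(γ : ℂ) * ((SR t : ℂ) + Complex.I * (SI t : ℂ)) + (g : ℂ) * (r t : ℂ) * (D t : ℂ))
        * Complex.exp (Complex.I * (φ t : ℂ))
        = ((SR' t : ℂ) + Complex.I * (SI' t : ℂ)
          + Complex.I * (φ' t : ℂ) * ((SR t : ℂ) + Complex.I * (SI t : ℂ)))
          * Complex.exp (Complex.I * (φ t : ℂ)) := by
      rw [← this]; ring
    exact mul_right_cancel₀ hexp h2
  -- extract real/imag parts of A equation
  have eAre : -κ * r t + g * SR t = r' t := by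
    have := congrArg Complex.re heqA'
    simpa using this
  have eAim : g * SI t = r t * φ' t := by
    have := congrArg Complex.im heqA'
    simpa using this
  have hφ'eq : φ' t = g * SI t / r t := by
    field_simp [eAim.symm]; linarith [eAim]
  -- real/imag parts of S equation
  have eSre : -γ * SR t + g * r t * D t = SR' t - φ' t * SI t := by
    have := congrArg Complex.re heqS'
    simp at this
    linarith
  have eSim : -γ * SI t = SI' t + φ' t * SR t := by
    have := congrArg Complex.im heqS'
    simp at this
    linarith
  -- D equation
  have hconj : ((starRingEnd ℂ) (A t) * S t).re = r t * SR t := by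
    rw [hAeq t ht, hSeq t ht]
    have : (starRingEnd ℂ) ((r t : ℂ) * Complex.exp (Complex.I * (φ t : ℂ)))
        * (((SR t : ℂ) + Complex.I * (SI t : ℂ)) * Complex.exp (Complex.I * (φ t : ℂ)))
        = (r t : ℂ) * ((SR t : ℂ) + Complex.I * (SI t : ℂ))
          * ((starRingEnd ℂ) (Complex.exp (Complex.I * (φ t : ℂ)))
            * Complex.exp (Complex.I * (φ t : ℂ))) := by
      simp [map_mul]; ring
    have hc : (starRingEnd ℂ) (Complex.exp (Complex.I * (φ t : ℂ)))
        * Complex.exp (Complex.I * (φ t : ℂ)) = 1 := by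
      rw [← Complex.exp_conj, ← Complex.exp_add]
      simp
    rw [this, hc]
    simp
  have hDalt : HasDerivAt (fun s => DR s + d) (DR' t) t := (hDR t ht).add_const d
  have heqD : -4 * g * ((starRingEnd ℂ) (A t) * S t).re - 2 * γ * (D t - d) = DR' t := by
    refine hud.eq_deriv _ (hD t ht).hasDerivWithinAt
      (hDalt.hasDerivWithinAt.congr (fun s hs => hDeq s hs) (hDeq t ht))
  have hDt : D t = DR t + d := hDeq t ht
  refine ⟨eAre.symm, ?_, ?_, ?_, hφ'eq⟩
  · rw [← hDt]
    have : SR' t = -γ * SR t + g * r t * D t + φ' t * SI t := by linarith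
    rw [this, hφ'eq]
    field_simp
  · have : SI' t = -γ * SI t - φ' t * SR t := by linarith
    rw [this, hφ'eq]
    ring
  · rw [← heqD, hconj, hDt]
    ring
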